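/- Let Λ be a finite simple graph with vertices v_1, …, v_n and n ≥ 3, and let Γ(Λ) be the graph of the explicit construction. Then for all vertices u, w of Γ(Λ), the inclusion lk(u) ⊆ st(w) implies u = w. -/

import Mathlib

open SimpleGraph
open scoped commutatorElement

/-- The set of commutator relations defining the right-angled Artin group of a graph. -/
def raagRels {V : Type} (G : SimpleGraph V) : Set (FreeGroup V) :=
  {r | ∃ v w : V, G.Adj v w ∧ r = ⁅FreeGroup.of v, FreeGroup.of w⁆}

/-- The right-angled Artin group of a graph `G`. -/
abbrev RAAG {V : Type} (G : SimpleGraph V) : Type := PresentedGroup (raagRels G)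

/-- The subgroup of inner automorphisms of a group. -/
def Inn (G : Type*) [Group G] : Subgroup (MulAut G) := (MulAut.conj (G := G)).range

instance Inn.normal (G : Type*) [Group G] : (Inn G).Normal := by
  constructor
  intro x hx φ
  obtain ⟨g, rfl⟩ := hx
  refine ⟨φ g, ?_⟩
  ext h
  simp [MulAut.conj, mul_assoc]

/-- The outer automorphism group of a group. -/
abbrev Out (G : Type*) [Group G] : Type _ := MulAut G ⧸ Inn G

/-- The group of pure symmetric automorphisms of the right-angled Artin group of `G`:
those automorphisms sending each generator to a conjugate of itself. -/
def PSA {V : Type} (G : SimpleGraph V) : Subgroup (MulAut (RAAG G)) where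
  carrier := {φ | ∀ v : V,
    IsConj (PresentedGroup.of (rels := raagRels G) v) (φ (PresentedGroup.of v))}
  one_mem' := fun _ => IsConj.refl _
  mul_mem' := by
    intro φ ψ hφ hψ v
    rw [MulAut.mul_apply]
    exact (hφ v).trans (φ.toMonoidHom.map_isConj (hψ v))
  inv_mem' := by
    intro φ hφ v
    have h := (φ⁻¹ : MulAut (RAAG G)).toMonoidHom.map_isConj (hφ v)
    simp only [MulEquiv.coe_toMonoidHom] at h
    have h2 : (φ⁻¹ : MulAut (RAAG G)) (φ (PresentedGroup.of v)) = PresentedGroup.of v := by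
      simp
    rw [h2] at h
    exact h.symm

/-- The group of pure symmetric outer automorphisms: the image of `PSA` in `Out`. -/
def PSO {V : Type} (G : SimpleGraph V) : Subgroup (Out (RAAG G)) :=
  (PSA G).map (QuotientGroup.mk' (Inn (RAAG G)))

/-- The star of a vertex: the vertex together with its neighbours. -/
def graphStar {V : Type} (G : SimpleGraph V) (v : V) : Set V := insert v (G.neighborSet v)

/-- `IsCompOf G s A` says that `A` is the vertex set of a connected component of the
induced subgraph of `G` on `s`. -/
def IsCompOf {V : Type} (G : SimpleGraph V) (s : Set V) (A : Set V) : Prop :=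
  ∃ a : s, A = {x : V | ∃ hx : x ∈ s, (SimpleGraph.induce s G).Reachable ⟨x, hx⟩ a}

/-- The support graph of `G` at a vertex `v`: vertices are the connected components of
`G - st(v)`, and two distinct components `A`, `B` are adjacent if there is `b ∈ B` such
that `A` is also a connected component of `G - st(b)`, or symmetrically. -/
def SupportGraph {V : Type} (G : SimpleGraph V) (v : V) :
    SimpleGraph {A : Set V // IsCompOf G (graphStar G v)ᶜ A} :=
  SimpleGraph.fromRel (fun A B => ∃ b ∈ B.1, IsCompOf G (graphStar G b)ᶜ A.1)

/-- A pair of distinct non-adjacent vertices `(v, w)` is a separating intersection of links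
if `G - (lk(v) ∩ lk(w))` has a connected component containing neither `v` nor `w`. -/
def SILPair {V : Type} (G : SimpleGraph V) (v w : V) : Prop :=
  v ≠ w ∧ ¬ G.Adj v w ∧
    ∃ A : Set V, IsCompOf G (G.neighborSet v ∩ G.neighborSet w)ᶜ A ∧ v ∉ A ∧ w ∉ A
/-- Vertices of the graph `Γ(Λ)`: the vertices of `Λ` (indexed by `Fin n`, with `v i`
denoting `v_{i+1}`) together with new vertices `a₁, a₂, b₁, b₂, c₁, …, c_n, d₁, d₂`. -/
inductive GV (n : ℕ) : Type where
  | v (i : Fin n)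
  | a1 | a2 | b1 | b2
  | c (i : Fin n)
  | d1 | d2
deriving DecidableEq

/-- The edge relation of the graph `Γ(Λ)` (to be symmetrized by `SimpleGraph.fromRel`). -/
def gammaRel {n : ℕ} (Λ : SimpleGraph (Fin n)) : GV n → GV n → Prop
  | .v i, .v j => Λ.Adj i j
  | .c i, .v j => j = i ∨ (j : ℕ) = ((i : ℕ) + 1) % n
  | .c _, .d1 => True
  | .c _, .d2 => True
  | .d1, .v j => (j : ℕ) = 0
  | .d1, .b1 => True
  | .d2, .v j => (j : ℕ) ≠ 0
  | .d2, .b2 => True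
  | .v _, .b1 => True
  | .v _, .b2 => True
  | .b1, .a1 => True
  | .b2, .a2 => True
  | .a1, .a2 => True
  | _, _ => False

/-- The graph `Γ(Λ)` of the explicit construction. -/
def GammaGraph {n : ℕ} (Λ : SimpleGraph (Fin n)) : SimpleGraph (GV n) :=
  SimpleGraph.fromRel (gammaRel Λ)

/-- Vertices of the graph `Γ'(Λ)`: the vertices of `Λ` (indexed by `Fin n`, with `v i`
denoting `v_{i+1}`) together with new vertices
`a₁, a₂, a₃, b₁, b₂, b₃, c₁, …, c_n, d₁, d₂, d₃`. -/
inductive GV' (n : ℕ) : Type where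
  | v (i : Fin n)
  | a1 | a2 | a3 | b1 | b2 | b3
  | c (i : Fin n)
  | d1 | d2 | d3
deriving DecidableEq

/-- The edge relation of the graph `Γ'(Λ)` (to be symmetrized by `SimpleGraph.fromRel`). -/
def gammaRel' {n : ℕ} (Λ : SimpleGraph (Fin n)) : GV' n → GV' n → Prop
  | .v i, .v j => Λ.Adj i j
  | .c i, .v j => j = i ∨ (j : ℕ) = ((i : ℕ) + 1) % n
  | .c _, .d1 => True
  | .c _, .d2 => True
  | .c _, .d3 => True
  | .d1, .v j => (j : ℕ) = 0
  | .d1, .b1 => True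
  | .d2, .v j => (j : ℕ) = 1
  | .d3, .v j => 2 ≤ (j : ℕ)
  | .d3, .b3 => True
  | .d2, .d3 => True
  | .v _, .b1 => True
  | .v _, .b2 => True
  | .v _, .b3 => True
  | .b1, .a1 => True
  | .b2, .a2 => True
  | .b3, .a3 => True
  | .a1, .a2 => True
  | .a1, .a3 => True
  | .a2, .a3 => True
  | _, _ => False

/-- The graph `Γ'(Λ)` of the second explicit construction. -/
def GammaGraph' {n : ℕ} (Λ : SimpleGraph (Fin n)) : SimpleGraph (GV' n) :=
  SimpleGraph.fromRel (gammaRel' Λ)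

lemma succ_mod_fact {n m : ℕ} (hm : m < n) :
    (m+1 = n ∧ (m+1) % n = 0) ∨ (m+1 < n ∧ (m+1) % n = m+1) := by
  rcases Nat.lt_or_ge (m+1) n with h|h
  · exact Or.inr ⟨h, Nat.mod_eq_of_lt h⟩
  · have he : m+1 = n := by omega
    exact Or.inl ⟨he, by rw [he, Nat.mod_self]⟩

/-- In `Γ(Λ)` (with `n ≥ 3`), `lk(u) ⊆ st(w)` implies `u = w`. -/
theorem gammaGraph_link_star_condition
    (n : ℕ) (hn : 3 ≤ n) (Λ : SimpleGraph (Fin n)) :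
    ∀ u w : GV n,
      (GammaGraph Λ).neighborSet u ⊆ graphStar (GammaGraph Λ) w → u = w := by
  intro u w h
  have H : ∀ x : GV n, (GammaGraph Λ).Adj u x → x = w ∨ (GammaGraph Λ).Adj w x := by
    intro x hx
    have hmem := h hx
    simpa [graphStar, Set.mem_insert_iff] using hmem
  clear h
  have hn0 : 0 < n := by omega
  cases u with
  | a1 =>
    have h1 := H .b1 (by simp [GammaGraph, SimpleGraph.fromRel_adj, gammaRel])
    have h2 := H .a2 (by simp [GammaGraph, SimpleGraph.fromRel_adj, gammaRel])
    clear H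
    cases w <;> simp_all [GammaGraph, SimpleGraph.fromRel_adj, gammaRel]
  | a2 =>
    have h1 := H .b2 (by simp [GammaGraph, SimpleGraph.fromRel_adj, gammaRel])
    have h2 := H .a1 (by simp [GammaGraph, SimpleGraph.fromRel_adj, gammaRel])
    clear H
    cases w <;> simp_all [GammaGraph, SimpleGraph.fromRel_adj, gammaRel]
  | b1 =>
    have h1 := H .a1 (by simp [GammaGraph, SimpleGraph.fromRel_adj, gammaRel])
    have h2 := H .d1 (by simp [GammaGraph, SimpleGraph.fromRel_adj, gammaRel])
    clear H
    cases w <;> simp_all [GammaGraph, SimpleGraph.fromRel_adj, gammaRel]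
  | b2 =>
    have h1 := H .a2 (by simp [GammaGraph, SimpleGraph.fromRel_adj, gammaRel])
    have h2 := H .d2 (by simp [GammaGraph, SimpleGraph.fromRel_adj, gammaRel])
    clear H
    cases w <;> simp_all [GammaGraph, SimpleGraph.fromRel_adj, gammaRel]
  | d1 =>
    have h1 := H .b1 (by simp [GammaGraph, SimpleGraph.fromRel_adj, gammaRel])
    have h2 := H (.c ⟨0, by omega⟩) (by simp [GammaGraph, SimpleGraph.fromRel_adj, gammaRel])
    have h3 := H (.c ⟨1, by omega⟩) (by simp [GammaGraph, SimpleGraph.fromRel_adj, gammaRel])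
    have h4 := H (.c ⟨2, by omega⟩) (by simp [GammaGraph, SimpleGraph.fromRel_adj, gammaRel])
    have e1 : 1 % n = 1 := Nat.mod_eq_of_lt (by omega)
    have e2 : 2 % n = 2 := Nat.mod_eq_of_lt (by omega)
    have e3 : 3 % n = 0 ∨ 3 % n = 3 := by
      rcases Nat.lt_or_ge 3 n with h|h
      · exact Or.inr (Nat.mod_eq_of_lt h)
      · have : n = 3 := by omega
        subst this; simp
    clear H
    cases w <;> simp_all [GammaGraph, SimpleGraph.fromRel_adj, gammaRel, Fin.ext_iff] <;> omega
  | d2 =>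
    have h1 := H .b2 (by simp [GammaGraph, SimpleGraph.fromRel_adj, gammaRel])
    have h2 := H (.c ⟨0, by omega⟩) (by simp [GammaGraph, SimpleGraph.fromRel_adj, gammaRel])
    have h3 := H (.c ⟨1, by omega⟩) (by simp [GammaGraph, SimpleGraph.fromRel_adj, gammaRel])
    have h4 := H (.c ⟨2, by omega⟩) (by simp [GammaGraph, SimpleGraph.fromRel_adj, gammaRel])
    have e1 : 1 % n = 1 := Nat.mod_eq_of_lt (by omega)
    have e2 : 2 % n = 2 := Nat.mod_eq_of_lt (by omega)
    have e3 : 3 % n = 0 ∨ 3 % n = 3 := by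
      rcases Nat.lt_or_ge 3 n with h|h
      · exact Or.inr (Nat.mod_eq_of_lt h)
      · have : n = 3 := by omega
        subst this; simp
    clear H
    cases w <;> simp_all [GammaGraph, SimpleGraph.fromRel_adj, gammaRel, Fin.ext_iff] <;> omega
  | c i =>
    have h1 := H .d1 (by simp [GammaGraph, SimpleGraph.fromRel_adj, gammaRel])
    have h2 := H .d2 (by simp [GammaGraph, SimpleGraph.fromRel_adj, gammaRel])
    have h3 := H (.v i) (by simp [GammaGraph, SimpleGraph.fromRel_adj, gammaRel])
    have h4 := H (.v ⟨((i:ℕ)+1) % n, Nat.mod_lt _ hn0⟩)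
      (by simp [GammaGraph, SimpleGraph.fromRel_adj, gammaRel])
    have ei := succ_mod_fact i.isLt
    clear H
    cases w
    case c m =>
      have em := succ_mod_fact m.isLt
      simp_all [GammaGraph, SimpleGraph.fromRel_adj, gammaRel, Fin.ext_iff]
      omega
    all_goals simp_all [GammaGraph, SimpleGraph.fromRel_adj, gammaRel, Fin.ext_iff]
  | v i =>
    obtain ⟨k, hk⟩ : ∃ k : Fin n, ((k:ℕ)+1) % n = (i:ℕ) := by
      rcases Nat.eq_zero_or_pos (i:ℕ) with h0|h0
      · refine ⟨⟨n-1, by omega⟩, ?_⟩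
        show (n-1+1) % n = (i:ℕ)
        rw [Nat.sub_add_cancel (by omega), Nat.mod_self, h0]
      · refine ⟨⟨(i:ℕ)-1, by omega⟩, ?_⟩
        show ((i:ℕ)-1+1) % n = (i:ℕ)
        rw [Nat.sub_add_cancel h0, Nat.mod_eq_of_lt i.isLt]
    have h1 := H .b1 (by simp [GammaGraph, SimpleGraph.fromRel_adj, gammaRel])
    have h2 := H .b2 (by simp [GammaGraph, SimpleGraph.fromRel_adj, gammaRel])
    have h3 := H (.c i) (by simp [GammaGraph, SimpleGraph.fromRel_adj, gammaRel])
    have h4 := H (.c k) (by simp [GammaGraph, SimpleGraph.fromRel_adj, gammaRel, hk])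
    have ei := succ_mod_fact i.isLt
    have ek := succ_mod_fact k.isLt
    clear H
    cases w
    case v m =>
      have em := succ_mod_fact m.isLt
      simp_all [GammaGraph, SimpleGraph.fromRel_adj, gammaRel, Fin.ext_iff]
      omega
    all_goals simp_all [GammaGraph, SimpleGraph.fromRel_adj, gammaRel, Fin.ext_iff]
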